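/- Let m > n > 0. Then ∫₀^{m−n} p² / √( 4mn(m − n)² + ((m − n)² − 4mn)p² − p⁴ ) dp = 2m·E(√(m² − n²)/m) − (m + n)·E((m − n)/(m + n)), where E(k) = ∫₀^{π/2} √(1 − k² sin²θ) dθ is the complete elliptic integral of the second kind. -/

import Mathlib

open Real

/-- Complete elliptic integral of the second kind. -/
noncomputable def ellipticE (k : ℝ) : ℝ :=
  ∫ θ in (0:ℝ)..(π / 2), Real.sqrt (1 - k ^ 2 * Real.sin θ ^ 2)

section landen
variable (m n : ℝ) (hn : 0 < n) (hmn : n < m)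

include hn hmn in
lemma hh0_pos' (t : ℝ) : 0 < m - (m-n) * Real.sin t^2 := by
  have h1 : Real.sin t ^2 ≤ 1 := Real.sin_sq_le_one t
  nlinarith [mul_nonneg (by nlinarith : (0:ℝ) ≤ m-n) (by nlinarith : (0:ℝ) ≤ 1 - Real.sin t^2)]

include hn hmn in
lemma hR_pos' (t : ℝ) : 0 < m^2 - (m^2-n^2) * Real.sin t^2 := by
  have h1 : Real.sin t ^2 ≤ 1 := Real.sin_sq_le_one t
  nlinarith [mul_nonneg (by nlinarith : (0:ℝ) ≤ m^2-n^2) (by nlinarith : (0:ℝ) ≤ 1 - Real.sin t^2)]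

include hn hmn in
lemma hasDerivAt_psi (t : ℝ) :
    HasDerivAt (fun t => 2*t - Real.arctan ((m-n)*Real.sin t*Real.cos t/(m - (m-n)*Real.sin t^2)))
      ((m+n) * (m - (m-n)*Real.sin t^2) / (m^2 - (m^2-n^2)*Real.sin t^2)) t := by
  have hs := Real.sin_sq_add_cos_sq t
  have hD := hh0_pos' m n hn hmn t
  have hR := hR_pos' m n hn hmn t
  have hN : HasDerivAt (fun t => (m-n)*Real.sin t*Real.cos t)
      ((m-n)*(1-2*Real.sin t^2)) t := by
    have := ((Real.hasDerivAt_sin t).const_mul (m-n)).mul (Real.hasDerivAt_cos t)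
    refine this.congr_deriv ?_
    symm
    linear_combination (n-m) * hs
  have hDen : HasDerivAt (fun t => m - (m-n)*Real.sin t^2)
      (-(2*(m-n)*Real.sin t*Real.cos t)) t := by
    have := (hasDerivAt_const t m).sub (((Real.hasDerivAt_sin t).pow 2).const_mul (m-n))
    refine this.congr_deriv ?_
    ring
  have hT := hN.div hDen (ne_of_gt hD)
  have harc := (Real.hasDerivAt_arctan
      ((m-n)*Real.sin t*Real.cos t/(m - (m-n)*Real.sin t^2))).comp t hT
  have hlin : HasDerivAt (fun t : ℝ => 2*t) 2 t := by
    simpa using (hasDerivAt_id t).const_mul 2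
  have := hlin.sub harc
  refine this.congr_deriv ?_
  symm
  have h2 : 1 + ((m-n)*Real.sin t*Real.cos t/(m - (m-n)*Real.sin t^2)) ^ 2
      = (m^2 - (m^2-n^2)*Real.sin t^2)/(m - (m-n)*Real.sin t^2)^2 := by
    field_simp
    linear_combination ((m-n)^2*Real.sin t^2) * hs
  rw [h2, one_div_div]
  have h3 : (m - (m-n)*Real.sin t^2)^2/(m^2 - (m^2-n^2)*Real.sin t^2) *
      ((((m-n)*(1-2*Real.sin t^2))*(m - (m-n)*Real.sin t^2) -
        (m-n)*Real.sin t*Real.cos t * -(2*(m-n)*Real.sin t*Real.cos t)) /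
        (m - (m-n)*Real.sin t^2)^2)
      = (((m-n)*(1-2*Real.sin t^2))*(m - (m-n)*Real.sin t^2) -
        (m-n)*Real.sin t*Real.cos t * -(2*(m-n)*Real.sin t*Real.cos t)) /
        (m^2 - (m^2-n^2)*Real.sin t^2) := by
    field_simp
  rw [h3, eq_sub_iff_add_eq, ← add_div, div_eq_iff (ne_of_gt hR)]
  linear_combination (2*(m-n)^2*Real.sin t^2) * hs

include hn hmn in
lemma sqrt_one_add_T_sq (t : ℝ) :
    Real.sqrt (1 + ((m-n)*Real.sin t*Real.cos t/(m - (m-n)*Real.sin t^2)) ^ 2)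
      = Real.sqrt (m^2 - (m^2-n^2)*Real.sin t^2) / (m - (m-n)*Real.sin t^2) := by
  have hs := Real.sin_sq_add_cos_sq t
  have hD := hh0_pos' m n hn hmn t
  have hR := hR_pos' m n hn hmn t
  have h2 : 1 + ((m-n)*Real.sin t*Real.cos t/(m - (m-n)*Real.sin t^2)) ^ 2
      = (Real.sqrt (m^2 - (m^2-n^2)*Real.sin t^2) / (m - (m-n)*Real.sin t^2))^2 := by
    rw [div_pow, div_pow, Real.sq_sqrt hR.le]
    field_simp
    linear_combination ((m-n)^2*Real.sin t^2) * hs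
  rw [h2, Real.sqrt_sq (by positivity)]

include hn hmn in
lemma sin_psi (t : ℝ) :
    Real.sin (2*t - Real.arctan ((m-n)*Real.sin t*Real.cos t/(m - (m-n)*Real.sin t^2)))
      = (m+n)*Real.sin t*Real.cos t / Real.sqrt (m^2 - (m^2-n^2)*Real.sin t^2) := by
  have hD := hh0_pos' m n hn hmn t
  have hR := hR_pos' m n hn hmn t
  have hq : (0:ℝ) < Real.sqrt (m^2 - (m^2-n^2)*Real.sin t^2) := Real.sqrt_pos.2 hR
  rw [Real.sin_sub, Real.sin_arctan, Real.cos_arctan,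
    sqrt_one_add_T_sq m n hn hmn t, Real.sin_two_mul, Real.cos_two_mul']
  have hcc : Real.cos t ^2 - Real.sin t^2 = 1 - 2*Real.sin t^2 := by
    have hs := Real.sin_sq_add_cos_sq t; linarith
  rw [hcc]
  have hDn := hD.ne'
  generalize Real.sqrt (m^2 - (m^2-n^2)*Real.sin t^2) = Q at hq ⊢
  generalize hDD : m - (m-n)*Real.sin t^2 = D at hDn ⊢
  have hQn := hq.ne'
  field_simp
  subst hDD
  ring

include hn hmn in
lemma Phi_psi (t : ℝ) :
    Real.sqrt ((m+n)^2 - (m-n)^2 *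
        Real.sin (2*t - Real.arctan ((m-n)*Real.sin t*Real.cos t/(m - (m-n)*Real.sin t^2)))^2)
      = (m+n)*(m - (m-n)*Real.sin t^2) / Real.sqrt (m^2 - (m^2-n^2)*Real.sin t^2) := by
  have hs := Real.sin_sq_add_cos_sq t
  have hD := hh0_pos' m n hn hmn t
  have hR := hR_pos' m n hn hmn t
  have hq : (0:ℝ) < Real.sqrt (m^2 - (m^2-n^2)*Real.sin t^2) := Real.sqrt_pos.2 hR
  have hmn' : (0:ℝ) < m + n := by linarith
  rw [sin_psi m n hn hmn t]
  have h3 : (m+n)^2 - (m-n)^2 *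
      ((m+n)*Real.sin t*Real.cos t / Real.sqrt (m^2 - (m^2-n^2)*Real.sin t^2))^2
      = ((m+n)*(m - (m-n)*Real.sin t^2) / Real.sqrt (m^2 - (m^2-n^2)*Real.sin t^2))^2 := by
    rw [div_pow, div_pow, Real.sq_sqrt hR.le]
    rw [show (m+n)^2 - ((m-n)^2*(((m+n)*Real.sin t*Real.cos t)^2/(m^2 - (m^2-n^2)*Real.sin t^2)))
        = ((m+n)^2*(m^2 - (m^2-n^2)*Real.sin t^2) - (m-n)^2*((m+n)*Real.sin t*Real.cos t)^2)
          /(m^2 - (m^2-n^2)*Real.sin t^2) from by rw [sub_div, mul_div_cancel_right₀ _ hR.ne', mul_div_assoc]]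
    congr 1
    linear_combination (-(m+n)^2*(m-n)^2*Real.sin t^2) * hs
  rw [h3, Real.sqrt_sq (by positivity)]

include hn hmn in
lemma hasDerivAt_W (t : ℝ) :
    HasDerivAt (fun t => -(m^2-n^2) * Real.sin t * Real.cos t
        / Real.sqrt (m^2 - (m^2-n^2)*Real.sin t^2))
      ((m+n)^2*(m - (m-n)*Real.sin t^2)^2 / Real.sqrt (m^2 - (m^2-n^2)*Real.sin t^2)^3
        - 2*m*n / Real.sqrt (m^2 - (m^2-n^2)*Real.sin t^2)
        - 2*Real.sqrt (m^2 - (m^2-n^2)*Real.sin t^2)) t := by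
  have hs := Real.sin_sq_add_cos_sq t
  have hR := hR_pos' m n hn hmn t
  have hq : (0:ℝ) < Real.sqrt (m^2 - (m^2-n^2)*Real.sin t^2) := Real.sqrt_pos.2 hR
  have hq2 : Real.sqrt (m^2 - (m^2-n^2)*Real.sin t^2)^2 = m^2 - (m^2-n^2)*Real.sin t^2 :=
    Real.sq_sqrt hR.le
  have hNw : HasDerivAt (fun t => -(m^2-n^2) * Real.sin t * Real.cos t)
      (-(m^2-n^2)*(1-2*Real.sin t^2)) t := by
    have := ((Real.hasDerivAt_sin t).const_mul (-(m^2-n^2))).mul (Real.hasDerivAt_cos t)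
    refine this.congr_deriv ?_
    symm
    linear_combination (m^2-n^2) * hs
  have hRt : HasDerivAt (fun t => m^2 - (m^2-n^2)*Real.sin t^2)
      (-(2*(m^2-n^2)*Real.sin t*Real.cos t)) t := by
    have := (hasDerivAt_const t (m^2)).sub (((Real.hasDerivAt_sin t).pow 2).const_mul (m^2-n^2))
    refine this.congr_deriv ?_
    ring
  have hsq : HasDerivAt (fun t => Real.sqrt (m^2 - (m^2-n^2)*Real.sin t^2))
      (1/(2*Real.sqrt (m^2 - (m^2-n^2)*Real.sin t^2)) * (-(2*(m^2-n^2)*Real.sin t*Real.cos t))) t := by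
    exact (Real.hasDerivAt_sqrt (ne_of_gt hR)).comp t hRt
  have hW := hNw.div hsq (ne_of_gt hq)
  refine hW.congr_deriv ?_
  symm
  set q := Real.sqrt (m^2 - (m^2-n^2)*Real.sin t^2) with hqdef
  have hval : (-(m^2-n^2)*(1-2*Real.sin t^2) * q -
        -(m^2-n^2)*Real.sin t*Real.cos t * (1/(2*q) * -(2*(m^2-n^2)*Real.sin t*Real.cos t)))/q^2
      = (2*(-(m^2-n^2)*(1-2*Real.sin t^2))*q^2
          - (-(m^2-n^2)*Real.sin t*Real.cos t)*(-(2*(m^2-n^2)*Real.sin t*Real.cos t)))/(2*q^3) := by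
    field_simp
  rw [hval]
  have hlhs : (m+n)^2*(m - (m-n)*Real.sin t^2)^2/q^3 - 2*m*n/q - 2*q
      = (2*((m+n)^2*(m - (m-n)*Real.sin t^2)^2) - 4*m*n*q^2 - 4*(q^2)^2)/(2*q^3) := by
    field_simp
    ring
  rw [hlhs]
  congr 1
  rw [hq2]
  linear_combination (2*(m^2-n^2)^2*Real.sin t^2) * hs
-- continuity helpers
include hn hmn in
lemma cont_sqrtR : Continuous (fun t => Real.sqrt (m^2 - (m^2-n^2)*Real.sin t^2)) := by
  exact Real.continuous_sqrt.comp (by continuity)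

include hn hmn in
lemma cont_Phi : Continuous (fun u => Real.sqrt ((m+n)^2 - (m-n)^2*Real.sin u^2)) := by
  exact Real.continuous_sqrt.comp (by continuity)

include hn hmn in
lemma cont_G : Continuous (fun θ => Real.sqrt (4*m*n + (m-n)^2*Real.sin θ^2)) := by
  exact Real.continuous_sqrt.comp (by continuity)

include hn hmn in
lemma hPhi_pos' (u : ℝ) : 0 < (m+n)^2 - (m-n)^2 * Real.sin u^2 := by
  have h1 : Real.sin u ^2 ≤ 1 := Real.sin_sq_le_one u
  have hm : 0 < m := hn.trans hmn
  nlinarith [mul_nonneg (by nlinarith : (0:ℝ) ≤ (m-n)^2) (by nlinarith : (0:ℝ) ≤ 1 - Real.sin u^2)]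

include hn hmn in
lemma hG_pos' (θ : ℝ) : 0 < 4*m*n + (m-n)^2 * Real.sin θ^2 := by
  have hm : 0 < m := hn.trans hmn
  nlinarith [sq_nonneg ((m-n) * Real.sin θ)]

-- generic doubling and reflection
lemma reflect_int (f : ℝ → ℝ) : ∫ u in (0:ℝ)..(π/2), f (π/2 - u) = ∫ u in (0:ℝ)..(π/2), f u := by
  have := intervalIntegral.integral_comp_sub_left (a := (0:ℝ)) (b := π/2) f (π/2)
  simpa using this

lemma double_int (f : ℝ → ℝ) (hf : Continuous f) (hsym : ∀ x, f (π - x) = f x) :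
    ∫ u in (0:ℝ)..π, f u = 2 * ∫ u in (0:ℝ)..(π/2), f u := by
  have h1 := intervalIntegral.integral_add_adjacent_intervals
    (μ := MeasureTheory.volume) (a := (0:ℝ)) (b := π/2) (c := π) (f := f)
    (hf.intervalIntegrable _ _) (hf.intervalIntegrable _ _)
  have h2 : ∫ u in (π/2:ℝ)..π, f u = ∫ u in (0:ℝ)..(π/2), f u := by
    have h3 := intervalIntegral.integral_comp_sub_left (a := (0:ℝ)) (b := π/2) f π
    rw [show π - π/2 = π/2 by ring, sub_zero] at h3
    rw [← h3]
    apply intervalIntegral.integral_congr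
    intro x _
    exact hsym x
  linarith

include hn hmn in
lemma subst_psi (F : ℝ → ℝ) (hF : Continuous F) :
    ∫ t in (0:ℝ)..(π/2), ((m+n)*(m - (m-n)*Real.sin t^2)/(m^2 - (m^2-n^2)*Real.sin t^2)) •
        F (2*t - Real.arctan ((m-n)*Real.sin t*Real.cos t/(m - (m-n)*Real.sin t^2)))
      = ∫ u in (0:ℝ)..π, F u := by
  have hcont : ContinuousOn (fun t => (m+n)*(m - (m-n)*Real.sin t^2)/(m^2 - (m^2-n^2)*Real.sin t^2))
      (Set.uIcc 0 (π/2)) := by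
    apply Continuous.continuousOn
    exact Continuous.div (by continuity) (by continuity) (fun x => ne_of_gt (hR_pos' m n hn hmn x))
  have key := intervalIntegral.integral_comp_smul_deriv
    (f := fun t => 2*t - Real.arctan ((m-n)*Real.sin t*Real.cos t/(m - (m-n)*Real.sin t^2)))
    (f' := fun t => (m+n)*(m - (m-n)*Real.sin t^2)/(m^2 - (m^2-n^2)*Real.sin t^2))
    (g := F) (a := (0:ℝ)) (b := π/2)
    (fun x _ => hasDerivAt_psi m n hn hmn x) hcont hF
  simp only [Function.comp] at key
  rw [key]
  norm_num [Real.cos_pi_div_two]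
  rw [show 2*(π/2) = π by ring]

include hn hmn in
lemma int_Phi_subst :
    ∫ u in (0:ℝ)..π, Real.sqrt ((m+n)^2 - (m-n)^2*Real.sin u^2)
      = ∫ t in (0:ℝ)..(π/2),
          (m+n)^2*(m - (m-n)*Real.sin t^2)^2 / Real.sqrt (m^2 - (m^2-n^2)*Real.sin t^2)^3 := by
  rw [← subst_psi m n hn hmn _ (cont_Phi m n hn hmn)]
  apply intervalIntegral.integral_congr
  intro t _
  have hD := hh0_pos' m n hn hmn t
  have hR := hR_pos' m n hn hmn t
  have hq : (0:ℝ) < Real.sqrt (m^2 - (m^2-n^2)*Real.sin t^2) := Real.sqrt_pos.2 hR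
  have hq2 : Real.sqrt (m^2 - (m^2-n^2)*Real.sin t^2)^2 = m^2 - (m^2-n^2)*Real.sin t^2 :=
    Real.sq_sqrt hR.le
  beta_reduce
  beta_reduce
  rw [smul_eq_mul, Phi_psi m n hn hmn t]
  set q := Real.sqrt (m^2 - (m^2-n^2)*Real.sin t^2) with hqd
  rw [← hq2]
  field_simp

include hn hmn in
lemma int_invPhi_subst :
    ∫ u in (0:ℝ)..π, 1/Real.sqrt ((m+n)^2 - (m-n)^2*Real.sin u^2)
      = ∫ t in (0:ℝ)..(π/2), 1/Real.sqrt (m^2 - (m^2-n^2)*Real.sin t^2) := by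
  have hcontinv : Continuous (fun u => 1/Real.sqrt ((m+n)^2 - (m-n)^2*Real.sin u^2)) := by
    apply Continuous.div continuous_const (cont_Phi m n hn hmn)
    intro x
    exact ne_of_gt (Real.sqrt_pos.2 (hPhi_pos' m n hn hmn x))
  rw [← subst_psi m n hn hmn _ hcontinv]
  apply intervalIntegral.integral_congr
  intro t _
  have hD := hh0_pos' m n hn hmn t
  have hR := hR_pos' m n hn hmn t
  have hmn' : (0:ℝ) < m + n := by linarith
  have hq : (0:ℝ) < Real.sqrt (m^2 - (m^2-n^2)*Real.sin t^2) := Real.sqrt_pos.2 hR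
  have hq2 : Real.sqrt (m^2 - (m^2-n^2)*Real.sin t^2)^2 = m^2 - (m^2-n^2)*Real.sin t^2 :=
    Real.sq_sqrt hR.le
  beta_reduce
  rw [smul_eq_mul, Phi_psi m n hn hmn t]
  set q := Real.sqrt (m^2 - (m^2-n^2)*Real.sin t^2) with hqd
  rw [← hq2]
  have hDD : (m+n)*(m - (m-n)*Real.sin t^2) ≠ 0 := by positivity
  field_simp
include hn hmn in
lemma cont_invsqrtR : Continuous (fun t => 1/Real.sqrt (m^2 - (m^2-n^2)*Real.sin t^2)) := by
  apply Continuous.div continuous_const (cont_sqrtR m n hn hmn)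
  exact fun x => ne_of_gt (Real.sqrt_pos.2 (hR_pos' m n hn hmn x))

include hn hmn in
lemma int_W_zero :
    ∫ t in (0:ℝ)..(π/2),
        ((m+n)^2*(m - (m-n)*Real.sin t^2)^2 / Real.sqrt (m^2 - (m^2-n^2)*Real.sin t^2)^3
          - 2*m*n * (1/Real.sqrt (m^2 - (m^2-n^2)*Real.sin t^2))
          - 2*Real.sqrt (m^2 - (m^2-n^2)*Real.sin t^2)) = 0 := by
  have hcont : Continuous (fun t =>
      (m+n)^2*(m - (m-n)*Real.sin t^2)^2 / Real.sqrt (m^2 - (m^2-n^2)*Real.sin t^2)^3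
        - 2*m*n * (1/Real.sqrt (m^2 - (m^2-n^2)*Real.sin t^2))
        - 2*Real.sqrt (m^2 - (m^2-n^2)*Real.sin t^2)) := by
    apply Continuous.sub
    apply Continuous.sub
    · apply Continuous.div (by continuity) ((cont_sqrtR m n hn hmn).pow 3)
      intro x
      have := hR_pos' m n hn hmn x
      exact pow_ne_zero _ (Real.sqrt_pos.2 this).ne'
    · exact continuous_const.mul (Continuous.div continuous_const (cont_sqrtR m n hn hmn)
        (fun x => ne_of_gt (Real.sqrt_pos.2 (hR_pos' m n hn hmn x))))
    · exact continuous_const.mul (cont_sqrtR m n hn hmn)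
  rw [intervalIntegral.integral_eq_sub_of_hasDerivAt
    (f := fun t => -(m^2-n^2) * Real.sin t * Real.cos t
        / Real.sqrt (m^2 - (m^2-n^2)*Real.sin t^2))
    (fun t _ => by
      have h := hasDerivAt_W m n hn hmn t
      exact h.congr_deriv (by ring)) (hcont.intervalIntegrable _ _)]
  norm_num [Real.cos_pi_div_two]

include hn hmn in
lemma int_Phi_double :
    ∫ u in (0:ℝ)..π, Real.sqrt ((m+n)^2 - (m-n)^2*Real.sin u^2)
      = 2 * ∫ θ in (0:ℝ)..(π/2), Real.sqrt (4*m*n + (m-n)^2*Real.sin θ^2) := by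
  rw [double_int _ (cont_Phi m n hn hmn) (fun x => by rw [Real.sin_pi_sub])]
  congr 1
  rw [← reflect_int (fun u => Real.sqrt ((m+n)^2 - (m-n)^2*Real.sin u^2))]
  apply intervalIntegral.integral_congr
  intro θ _
  beta_reduce
  rw [Real.sin_pi_div_two_sub]
  congr 1
  have hs := Real.sin_sq_add_cos_sq θ
  linear_combination (-(m-n)^2) * hs

include hn hmn in
lemma int_invPhi_double :
    ∫ u in (0:ℝ)..π, 1/Real.sqrt ((m+n)^2 - (m-n)^2*Real.sin u^2)
      = 2 * ∫ θ in (0:ℝ)..(π/2), 1/Real.sqrt (4*m*n + (m-n)^2*Real.sin θ^2) := by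
  have hcontinv : Continuous (fun u => 1/Real.sqrt ((m+n)^2 - (m-n)^2*Real.sin u^2)) := by
    apply Continuous.div continuous_const (cont_Phi m n hn hmn)
    exact fun x => ne_of_gt (Real.sqrt_pos.2 (hPhi_pos' m n hn hmn x))
  rw [double_int _ hcontinv (fun x => by rw [Real.sin_pi_sub])]
  congr 1
  rw [← reflect_int (fun u => 1/Real.sqrt ((m+n)^2 - (m-n)^2*Real.sin u^2))]
  apply intervalIntegral.integral_congr
  intro θ _
  beta_reduce
  rw [Real.sin_pi_div_two_sub]
  congr 2
  have hs := Real.sin_sq_add_cos_sq θ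
  linear_combination (-(m-n)^2) * hs

include hn hmn in
lemma L1_subst :
    ∫ p in (0:ℝ)..(m-n), p^2 / Real.sqrt (((m-n)^2 - p^2) * (4*m*n + p^2))
      = ∫ θ in (0:ℝ)..(π/2),
          (m-n)^2*Real.sin θ^2 / Real.sqrt (4*m*n + (m-n)^2*Real.sin θ^2) := by
  have ha : (0:ℝ) < m - n := by linarith
  have hpi : (0:ℝ) < π/2 := by positivity
  have himg : (fun θ => (m-n)*Real.sin θ) '' (Set.Ioo 0 (π/2)) = Set.Ioo 0 (m-n) := by
    ext p
    constructor
    · rintro ⟨θ, ⟨h1, h2⟩, rfl⟩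
      have hsp : 0 < Real.sin θ := Real.sin_pos_of_pos_of_lt_pi h1 (by linarith [Real.pi_pos])
      have hs1 : Real.sin θ < 1 := by
        have := Real.strictMonoOn_sin (by constructor <;> nlinarith [Real.pi_pos] : θ ∈ Set.Icc (-(π/2)) (π/2))
          (by constructor <;> nlinarith [Real.pi_pos] : (π/2) ∈ Set.Icc (-(π/2)) (π/2)) h2
        simpa using this
      simp only [Set.mem_Ioo]
      exact ⟨by positivity, by nlinarith⟩
    · rintro ⟨hp1, hp2⟩
      refine ⟨Real.arcsin (p/(m-n)), ⟨?_, ?_⟩, ?_⟩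
      · exact Real.arcsin_pos.2 (by positivity)
      · exact Real.arcsin_lt_pi_div_two.2 (by rw [div_lt_one ha]; linarith)
      · show (m-n) * Real.sin (Real.arcsin (p/(m-n))) = p
        rw [Real.sin_arcsin (le_trans (by norm_num : (-1:ℝ) ≤ 0) (by positivity))
          (by rw [div_le_one ha]; linarith)]
        field_simp
  have hderiv : ∀ x ∈ Set.Ioo (0:ℝ) (π/2),
      HasDerivWithinAt (fun θ => (m-n)*Real.sin θ) ((m-n)*Real.cos x) (Set.Ioo 0 (π/2)) x :=
    fun x _ => ((Real.hasDerivAt_sin x).const_mul (m-n)).hasDerivWithinAt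
  have hinj : Set.InjOn (fun θ => (m-n)*Real.sin θ) (Set.Ioo 0 (π/2)) := by
    intro x hx y hy hxy
    have hsin : Real.sin x = Real.sin y := by
      exact mul_left_cancel₀ ha.ne' hxy
    apply Real.injOn_sin _ _ hsin
    · constructor <;> [linarith [hx.1, Real.pi_pos]; exact hx.2.le]
    · constructor <;> [linarith [hy.1, Real.pi_pos]; exact hy.2.le]
  have key := MeasureTheory.integral_image_eq_integral_abs_deriv_smul
    measurableSet_Ioo hderiv hinj
    (fun p => p^2 / Real.sqrt (((m-n)^2 - p^2) * (4*m*n + p^2)))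
  rw [himg] at key
  rw [intervalIntegral.integral_of_le ha.le, intervalIntegral.integral_of_le hpi.le,
    MeasureTheory.integral_Ioc_eq_integral_Ioo, MeasureTheory.integral_Ioc_eq_integral_Ioo, key]
  apply MeasureTheory.setIntegral_congr_fun measurableSet_Ioo
  intro θ hθ
  beta_reduce
  have hs := Real.sin_sq_add_cos_sq θ
  have hsp : 0 < Real.sin θ := Real.sin_pos_of_pos_of_lt_pi hθ.1 (by linarith [Real.pi_pos, hθ.2])
  have hcp : 0 < Real.cos θ := Real.cos_pos_of_mem_Ioo ⟨by linarith [hθ.1, Real.pi_pos], hθ.2⟩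
  have hGp := hG_pos' m n hn hmn θ
  have hqG : (0:ℝ) < Real.sqrt (4*m*n + (m-n)^2*Real.sin θ^2) := Real.sqrt_pos.2 hGp
  rw [smul_eq_mul, abs_of_pos (by positivity : (0:ℝ) < (m-n)*Real.cos θ)]
  have hfac : ((m-n)^2 - ((m-n)*Real.sin θ)^2) * (4*m*n + ((m-n)*Real.sin θ)^2)
      = ((m-n)*Real.cos θ)^2 * (4*m*n + (m-n)^2*Real.sin θ^2) := by
    linear_combination (-(m-n)^2*(4*m*n + (m-n)^2*Real.sin θ^2)) * hs
  rw [hfac, Real.sqrt_mul (sq_nonneg _), Real.sqrt_sq (by positivity : (0:ℝ) ≤ (m-n)*Real.cos θ)]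
  rw [mul_pow]
  field_simp

include hn hmn in
lemma L4' : 2 * m * ellipticE (Real.sqrt (m ^ 2 - n ^ 2) / m) =
    2 * ∫ t in (0:ℝ)..(π/2), Real.sqrt (m^2 - (m^2-n^2)*Real.sin t^2) := by
  have hm : 0 < m := hn.trans hmn
  rw [ellipticE, ← intervalIntegral.integral_const_mul, ← intervalIntegral.integral_const_mul]
  apply intervalIntegral.integral_congr
  intro t _
  beta_reduce
  have hk : (Real.sqrt (m ^ 2 - n ^ 2) / m) ^ 2 = (m^2 - n^2)/m^2 := by
    rw [div_pow, Real.sq_sqrt (by nlinarith)]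
  rw [hk, show (2:ℝ) * m * Real.sqrt (1 - (m ^ 2 - n ^ 2) / m ^ 2 * Real.sin t ^ 2)
      = 2 * (m * Real.sqrt (1 - (m ^ 2 - n ^ 2) / m ^ 2 * Real.sin t ^ 2)) from by ring]
  congr 1
  rw [show m = Real.sqrt (m^2) from (Real.sqrt_sq hm.le).symm]
  rw [← Real.sqrt_mul (by positivity), Real.sqrt_sq hm.le]
  congr 1
  field_simp

include hn hmn in
lemma L3' : (m + n) * ellipticE ((m - n) / (m + n)) =
    ∫ θ in (0:ℝ)..(π/2), Real.sqrt (4*m*n + (m-n)^2 * Real.sin θ^2) := by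
  have hm : 0 < m := hn.trans hmn
  have hmn' : (0:ℝ) < m + n := by linarith
  have step1 : (m + n) * ellipticE ((m - n) / (m + n)) =
      ∫ θ in (0:ℝ)..(π/2), Real.sqrt (4*m*n + (m-n)^2 * Real.cos θ^2) := by
    rw [ellipticE, ← intervalIntegral.integral_const_mul]
    apply intervalIntegral.integral_congr
    intro t _
    beta_reduce
    have h1 : (m+n) * Real.sqrt (1 - ((m-n)/(m+n)) ^ 2 * Real.sin t ^ 2)
        = Real.sqrt ((m+n)^2 * (1 - ((m-n)/(m+n)) ^ 2 * Real.sin t ^ 2)) := by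
      rw [Real.sqrt_mul (sq_nonneg _), Real.sqrt_sq hmn'.le]
    rw [h1]
    congr 1
    have hc : Real.cos t^2 = 1 - Real.sin t^2 := by
      linarith [Real.sin_sq_add_cos_sq t]
    rw [hc]; field_simp; ring
  rw [step1, ← reflect_int (fun θ => Real.sqrt (4*m*n + (m-n)^2 * Real.sin θ^2))]
  apply intervalIntegral.integral_congr
  intro t _
  beta_reduce
  rw [Real.sin_pi_div_two_sub]

include hn hmn in
lemma landen_main :
    ∫ p in (0:ℝ)..(m - n),
        p ^ 2 / Real.sqrt (4 * m * n * (m - n) ^ 2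
          + ((m - n) ^ 2 - 4 * m * n) * p ^ 2 - p ^ 4)
      = 2 * m * ellipticE (Real.sqrt (m ^ 2 - n ^ 2) / m)
        - (m + n) * ellipticE ((m - n) / (m + n)) := by
  have hm : 0 < m := hn.trans hmn
  have hrad : ∀ p : ℝ, 4*m*n*(m-n)^2 + ((m-n)^2 - 4*m*n)*p^2 - p^4
      = ((m-n)^2 - p^2)*(4*m*n+p^2) := fun p => by ring
  simp only [hrad]
  rw [L1_subst m n hn hmn]
  have hpt : (∫ θ in (0:ℝ)..(π/2),
        (m-n)^2*Real.sin θ^2 / Real.sqrt (4*m*n + (m-n)^2*Real.sin θ^2))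
      = ∫ θ in (0:ℝ)..(π/2), (Real.sqrt (4*m*n + (m-n)^2*Real.sin θ^2)
          - 4*m*n*(1/Real.sqrt (4*m*n + (m-n)^2*Real.sin θ^2))) := by
    apply intervalIntegral.integral_congr
    intro θ _
    beta_reduce
    have hGp := hG_pos' m n hn hmn θ
    have hq : (0:ℝ) < Real.sqrt (4*m*n + (m-n)^2*Real.sin θ^2) := Real.sqrt_pos.2 hGp
    have hq2 : Real.sqrt (4*m*n + (m-n)^2*Real.sin θ^2)^2 = 4*m*n + (m-n)^2*Real.sin θ^2 :=
      Real.sq_sqrt hGp.le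
    field_simp
    ring_nf; ring_nf at hq2; linarith
  rw [hpt]
  have hcG := cont_G m n hn hmn
  have hciG : Continuous (fun θ => 4*m*n*(1/Real.sqrt (4*m*n + (m-n)^2*Real.sin θ^2))) :=
    continuous_const.mul (Continuous.div continuous_const hcG
      (fun x => ne_of_gt (Real.sqrt_pos.2 (hG_pos' m n hn hmn x))))
  rw [intervalIntegral.integral_sub (hcG.intervalIntegrable _ _) (hciG.intervalIntegrable _ _),
    intervalIntegral.integral_const_mul]
  -- key facts
  have f1 : (∫ t in (0:ℝ)..(π/2),
        (m+n)^2*(m - (m-n)*Real.sin t^2)^2 / Real.sqrt (m^2 - (m^2-n^2)*Real.sin t^2)^3)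
      = 2 * ∫ θ in (0:ℝ)..(π/2), Real.sqrt (4*m*n + (m-n)^2*Real.sin θ^2) :=
    (int_Phi_subst m n hn hmn).symm.trans (int_Phi_double m n hn hmn)
  have f2 : (∫ t in (0:ℝ)..(π/2), 1/Real.sqrt (m^2 - (m^2-n^2)*Real.sin t^2))
      = 2 * ∫ θ in (0:ℝ)..(π/2), 1/Real.sqrt (4*m*n + (m-n)^2*Real.sin θ^2) :=
    (int_invPhi_subst m n hn hmn).symm.trans (int_invPhi_double m n hn hmn)
  have hcA : Continuous (fun t =>
      (m+n)^2*(m - (m-n)*Real.sin t^2)^2 / Real.sqrt (m^2 - (m^2-n^2)*Real.sin t^2)^3) := by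
    apply Continuous.div (by continuity) ((cont_sqrtR m n hn hmn).pow 3)
    intro x
    have := hR_pos' m n hn hmn x
    exact pow_ne_zero _ (Real.sqrt_pos.2 this).ne'
  have hciH : Continuous (fun t => 2*m*n*(1/Real.sqrt (m^2 - (m^2-n^2)*Real.sin t^2))) :=
    continuous_const.mul (cont_invsqrtR m n hn hmn)
  have hch : Continuous (fun t => 2*Real.sqrt (m^2 - (m^2-n^2)*Real.sin t^2)) :=
    continuous_const.mul (cont_sqrtR m n hn hmn)
  have f3 := int_W_zero m n hn hmn
  rw [intervalIntegral.integral_sub (f := fun t => (m+n)^2*(m - (m-n)*Real.sin t^2)^2 / Real.sqrt (m^2 - (m^2-n^2)*Real.sin t^2)^3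
        - 2*m*n*(1/Real.sqrt (m^2 - (m^2-n^2)*Real.sin t^2))) ((hcA.sub hciH).intervalIntegrable _ _)
      (hch.intervalIntegrable _ _),
    intervalIntegral.integral_sub (hcA.intervalIntegrable _ _) (hciH.intervalIntegrable _ _),
    intervalIntegral.integral_const_mul, intervalIntegral.integral_const_mul] at f3
  rw [L4' m n hn hmn, L3' m n hn hmn]
  have f2' : 2*m*n*(∫ t in (0:ℝ)..(π/2), 1/Real.sqrt (m^2 - (m^2-n^2)*Real.sin t^2))
      = 4*m*n*(∫ θ in (0:ℝ)..(π/2), 1/Real.sqrt (4*m*n + (m-n)^2*Real.sin θ^2)) := by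
    rw [f2]; ring
  linarith [f1, f2', f3]

end landen

/-- Landen's limit excess theorem: the limit hyperbolic excess of the hyperbola
with semiaxes `m − n` and `2√(mn)` equals `2S₂ − S₁`, where `S₂` and `S₁` are the
quadrantal arcs of the two auxiliary ellipses. -/
theorem landen_limit_excess (m n : ℝ) (hn : 0 < n) (hmn : n < m) :
    ∫ p in (0:ℝ)..(m - n),
        p ^ 2 / Real.sqrt (4 * m * n * (m - n) ^ 2
          + ((m - n) ^ 2 - 4 * m * n) * p ^ 2 - p ^ 4)
      = 2 * m * ellipticE (Real.sqrt (m ^ 2 - n ^ 2) / m)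
        - (m + n) * ellipticE ((m - n) / (m + n)) :=
  landen_main m n hn hmn
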